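/- Reversibility of the index-augmented merge step: let p be a natural number (the pivot), and let l₁ and l₂ be lists of pairs (v, i) of natural numbers, each strictly sorted in increasing order of the first component v, such that all first components occurring in l₁ ++ l₂ are pairwise distinct, every pair in l₁ has second component i < p, and every pair in l₂ has second component i ≥ p. Then for any list m that is a permutation of l₁ ++ l₂ and is sorted in increasing order of the first component, filtering m by the predicate (i < p) on the second component yields exactly l₁, and filtering m by (i ≥ p) yields exactly l₂. Consequently the sorted merged list m together with p uniquely determines the input pair (l₁, l₂), so merging is injective (reversible) on such inputs. -/

import Mathlib

/-- Reversibility of the index-augmented merge step: if `l₁` and `l₂` are lists of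
(value, index) pairs, each strictly sorted by value, with pairwise-distinct values
overall, all indices in `l₁` below the pivot `p` and all indices in `l₂` at least `p`,
then any sorted permutation `m` of `l₁ ++ l₂` determines `l₁` and `l₂`: filtering `m`
by index `< p` yields exactly `l₁`, and filtering by index `≥ p` yields exactly `l₂`. -/
theorem merge_step_reversible (p : ℕ) (l₁ l₂ m : List (ℕ × ℕ))
    (h₁ : List.Pairwise (fun a b : ℕ × ℕ => a.1 < b.1) l₁)
    (h₂ : List.Pairwise (fun a b : ℕ × ℕ => a.1 < b.1) l₂)
    (hnodup : ((l₁ ++ l₂).map Prod.fst).Nodup)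
    (hi₁ : ∀ x ∈ l₁, x.2 < p)
    (hi₂ : ∀ x ∈ l₂, p ≤ x.2)
    (hperm : m.Perm (l₁ ++ l₂))
    (hm : List.Pairwise (fun a b : ℕ × ℕ => a.1 < b.1) m) :
    m.filter (fun x => x.2 < p) = l₁ ∧ m.filter (fun x => p ≤ x.2) = l₂ := by
  have hanti : IsAntisymm (ℕ × ℕ) (fun a b : ℕ × ℕ => a.1 < b.1) :=
    ⟨fun a b h h' => absurd h' (not_lt.mpr h.le)⟩
  have e1 : (l₁ ++ l₂).filter (fun x => x.2 < p) = l₁ := by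
    rw [List.filter_append, List.filter_eq_self.mpr (fun x hx => by simpa using hi₁ x hx),
      List.filter_eq_nil_iff.mpr (fun x hx => by simpa using hi₂ x hx), List.append_nil]
  have e2 : (l₁ ++ l₂).filter (fun x => p ≤ x.2) = l₂ := by
    rw [List.filter_append, List.filter_eq_nil_iff.mpr (fun x hx => by simpa using hi₁ x hx),
      List.filter_eq_self.mpr (fun x hx => by simpa using hi₂ x hx), List.nil_append]
  constructor
  · exact List.Perm.eq_of_pairwise (fun a b _ _ h h' => absurd h' (not_lt.mpr h.le)) (hm.filter _) h₁ (e1 ▸ hperm.filter _)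
  · exact List.Perm.eq_of_pairwise (fun a b _ _ h h' => absurd h' (not_lt.mpr h.le)) (hm.filter _) h₂ (e2 ▸ hperm.filter _)
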